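/- Let K be a simplicial complex on [m] and α a partition of [m] nondegenerate for K. In the Koszul complex Λ_k[t₁,…,t_r] ⊗ k(K) with differential d_α(t_i) = Σ_{j∈α_i} v_j and d_α(v_j) = 0, for each L ⊆ [r] the k-submodule spanned by the elements t_I v^{(σ,h)} with σ ∈ K, supp(h) = σ, and I_α(σ) ∪ I = L is a subcomplex (is preserved by d_α), and the whole complex is the direct sum of these subcomplexes over all L ⊆ [r]. -/

import Mathlib

open Finset
set_option maxHeartbeats 1000000
set_option synthInstance.maxHeartbeats 1000000

/-- An abstract simplicial complex on the vertex set `Fin m`. -/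
structure SimplicialComplexOn (m : ℕ) where
  faces : Set (Finset (Fin m))
  down_closed : ∀ σ ∈ faces, ∀ τ ⊆ σ, τ ∈ faces
  empty_mem : (∅ : Finset (Fin m)) ∈ faces
  singleton_mem : ∀ j : Fin m, {j} ∈ faces

/-- `dim K + 1`, i.e. the maximal cardinality of a face of `K`. -/
noncomputable def SimplicialComplexOn.dimAdd1 {m : ℕ} (K : SimplicialComplexOn m) : ℕ :=
  sSup {n : ℕ | ∃ σ ∈ K.faces, σ.card = n}

/-- A partition of `[m]`, encoded as a coloring `c : Fin m → Fin r`
(the block `α_i` being the fiber `c ⁻¹ {i}`), is nondegenerate for `K` if every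
face of `K` meets each block in at most one vertex; equivalently, the two
vertices of any 1-simplex of `K` lie in different blocks. -/
def IsNondegenerate {m r : ℕ} (K : SimplicialComplexOn m) (c : Fin m → Fin r) : Prop :=
  ∀ σ ∈ K.faces, ∀ j ∈ σ, ∀ j' ∈ σ, c j = c j' → j = j'

/-- For a coloring `c : Fin m → Fin r` encoding the partition `α` and a set of
colors `L ⊆ [r]`, `omegaOf c L = ω_L = ⋃_{i ∈ L} α_i ⊆ [m]`. -/
def omegaOf {m r : ℕ} (c : Fin m → Fin r) (L : Finset (Fin r)) : Finset (Fin m) :=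
  Finset.univ.filter (fun j => c j ∈ L)

open MvPolynomial in
/-- The Stanley–Reisner ideal of `K`: the ideal of `k[v₁,…,v_m]` generated by
the squarefree monomials `v^τ = ∏_{j∈τ} v_j` over the non-faces `τ ∉ K`. -/
noncomputable def SRideal {m : ℕ} (K : SimplicialComplexOn m) (k : Type*) [Field k] :
    Ideal (MvPolynomial (Fin m) k) :=
  Ideal.span {p | ∃ τ : Finset (Fin m), τ ∉ K.faces ∧ p = ∏ j ∈ τ, (X j : MvPolynomial (Fin m) k)}

/-- The Stanley–Reisner ring `k(K) = k[v₁,…,v_m]/I_K`. -/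
abbrev SRring {m : ℕ} (K : SimplicialComplexOn m) (k : Type*) [Field k] :=
  MvPolynomial (Fin m) k ⧸ SRideal K k

open MvPolynomial in
/-- The `k`-algebra map `k[u₁,…,u_r] → k(K)`, `u_i ↦ Σ_{j ∈ α_i} v_j`,
inducing the `k[u₁,…,u_r]`-module structure on `k(K)` determined by the
partition encoded by the coloring `c`. -/
noncomputable def srAlgHom {m r : ℕ} (K : SimplicialComplexOn m) (k : Type*) [Field k]
    (c : Fin m → Fin r) : MvPolynomial (Fin r) k →ₐ[k] SRring K k :=
  aeval (fun i : Fin r =>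
    Ideal.Quotient.mk (SRideal K k)
      (∑ j ∈ Finset.univ.filter (fun j => c j = i), (X j : MvPolynomial (Fin m) k)))

open MvPolynomial in
/-- The image in `k(K)` of `Σ_{j ∈ α_i} v_j` (the image of `u_i`). -/
noncomputable def vSum {m r : ℕ} (K : SimplicialComplexOn m) (k : Type*) [Field k]
    (c : Fin m → Fin r) (i : Fin r) : SRring K k :=
  Ideal.Quotient.mk (SRideal K k)
    (∑ j ∈ Finset.univ.filter (fun j => c j = i), (X j : MvPolynomial (Fin m) k))

/-- The underlying `k`-module of the Koszul complex
`Λ_k[t₁,…,t_r] ⊗ k(K)`: an element is a finitely supported family, indexed by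
the subsets `I ⊆ [r]` (recording the exterior monomial `t_I`), of elements of
`k(K)`. -/
abbrev KoszulModule {m : ℕ} (K : SimplicialComplexOn m) (k : Type*) [Field k]
    (r : ℕ) : Type _ :=
  Finset (Fin r) →₀ SRring K k

/-- The Koszul differential `d_α` on `Λ_k[t₁,…,t_r] ⊗ k(K)`, determined by
`d_α(t_i) = Σ_{j∈α_i} v_j` and `d_α(v_j) = 0`:
`d_α(t_I ⊗ p) = Σ_{i∈I} (−1)^{|{i'∈I : i'<i}|} t_{I∖{i}} ⊗ (Σ_{j∈α_i} v_j)·p`. -/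
noncomputable def koszulDiff {m r : ℕ} (K : SimplicialComplexOn m) (k : Type*)
    [Field k] (c : Fin m → Fin r) :
    KoszulModule K k r →ₗ[k] KoszulModule K k r :=
  Finsupp.lsum k fun I : Finset (Fin r) =>
    ∑ i ∈ I, ((-1 : k) ^ (I.filter (fun y => y < i)).card) •
      ((Finsupp.lsingle (I.erase i)).comp (LinearMap.mulLeft k (vSum K k c i)))

open MvPolynomial in
/-- The `k`-submodule of `Λ_k[t₁,…,t_r] ⊗ k(K)` spanned by the basis elements
`t_I ⊗ v^{(σ,h)}` with `σ = supp(h) ∈ K` and `I_α(σ) ∪ I = L`. -/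
noncomputable def koszulSub {m r : ℕ} (K : SimplicialComplexOn m) (k : Type*)
    [Field k] (c : Fin m → Fin r) (L : Finset (Fin r)) :
    Submodule k (KoszulModule K k r) :=
  Submodule.span k {x | ∃ (I : Finset (Fin r)) (h : Fin m →₀ ℕ),
    h.support ∈ K.faces ∧ h.support.image c ∪ I = L ∧
    x = Finsupp.single I (Ideal.Quotient.mk (SRideal K k) (monomial h (1 : k)))}

open MvPolynomial

section Aux

variable {m : ℕ} (K : SimplicialComplexOn m) (k : Type*) [Field k]

lemma bad_mem_SRideal {h : Fin m →₀ ℕ} (hb : h.support ∉ K.faces) :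
    (monomial h (1 : k)) ∈ SRideal K k := by
  have key : (monomial h (1 : k)) =
      (∏ j ∈ h.support, X j) * ∏ j ∈ h.support, (X j : MvPolynomial (Fin m) k) ^ (h j - 1) := by
    rw [← prod_X_pow_eq_monomial, ← Finset.prod_mul_distrib]
    refine Finset.prod_congr rfl fun j hj => ?_
    rw [← pow_succ']
    congr 1
    have := Finsupp.mem_support_iff.mp hj
    omega
  rw [key]
  exact Ideal.mul_mem_right _ _ (Ideal.subset_span ⟨h.support, hb, rfl⟩)

noncomputable def badSpan : Submodule k (MvPolynomial (Fin m) k) :=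
  Submodule.span k ((fun h : Fin m →₀ ℕ => monomial h (1:k)) '' {h | h.support ∉ K.faces})

lemma mul_bad_mem : ∀ p : MvPolynomial (Fin m) k, ∀ q ∈ badSpan K k, p * q ∈ badSpan K k := by
  have step : ∀ (h : Fin m →₀ ℕ), h.support ∉ K.faces →
      ∀ p : MvPolynomial (Fin m) k, p * monomial h 1 ∈ badSpan K k := by
    intro h hb p
    induction p using MvPolynomial.induction_on' with
    | monomial u a =>
      rw [monomial_mul, mul_one]
      have hsupp : (u + h).support ∉ K.faces := by
        intro hf
        refine hb (K.down_closed _ hf _ ?_)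
        intro x hx
        rw [Finsupp.mem_support_iff] at hx ⊢
        simp only [Finsupp.add_apply]
        omega
      have : monomial (u + h) a = a • monomial (u + h) (1:k) := by
        rw [smul_monomial, smul_eq_mul, mul_one]
      rw [this]
      exact Submodule.smul_mem _ _ (Submodule.subset_span ⟨u + h, hsupp, rfl⟩)
    | add p q hp hq => rw [add_mul]; exact add_mem hp hq
  intro p q hq
  induction hq using Submodule.span_induction with
  | mem x hx => obtain ⟨h, hb, rfl⟩ := hx; exact step h hb p
  | zero => rw [mul_zero]; exact zero_mem _
  | add x y _ _ hx hy => rw [mul_add]; exact add_mem hx hy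
  | smul a x _ hx => rw [mul_smul_comm]; exact Submodule.smul_mem _ _ hx

lemma SRideal_eq_badSpan : ∀ p : MvPolynomial (Fin m) k, p ∈ SRideal K k ↔ p ∈ badSpan K k := by
  intro p
  constructor
  · intro hp
    let J : Ideal (MvPolynomial (Fin m) k) :=
      { carrier := badSpan K k
        add_mem' := fun ha hb => add_mem ha hb
        zero_mem' := zero_mem _
        smul_mem' := fun c x hx => by
          simpa [smul_eq_mul] using mul_bad_mem K k c x hx }
    have hJ : SRideal K k ≤ J := by
      rw [SRideal, Ideal.span_le]
      rintro _ ⟨τ, hτ, rfl⟩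
      have hmono : ∀ τ' : Finset (Fin m), ∏ j ∈ τ', (X j : MvPolynomial (Fin m) k)
          = monomial (∑ j ∈ τ', Finsupp.single j 1) (1:k) := by
        classical
        intro τ'
        induction τ' using Finset.induction_on with
        | empty => simp [monomial_zero']
        | insert a s hnotmem ih =>
          rw [Finset.prod_insert hnotmem, Finset.sum_insert hnotmem, ih,
            monomial_single_add, pow_one]
      have hsupp : (∑ j ∈ τ, Finsupp.single j (1:ℕ)).support = τ := by
        classical
        rw [Finsupp.support_sum_eq_biUnion]
        · refine Finset.ext fun x => ?_
          simp [Finsupp.support_single_ne_zero]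
        · intro i j hij
          simp only [Finsupp.support_single_ne_zero _ one_ne_zero]
          exact Finset.disjoint_singleton.mpr hij
      show _ ∈ badSpan K k
      rw [hmono τ]
      exact Submodule.subset_span ⟨_, by rw [Set.mem_setOf_eq, hsupp]; exact hτ, rfl⟩
    exact hJ hp
  · intro hp
    have hle : badSpan K k ≤ (SRideal K k).restrictScalars k := by
      refine Submodule.span_le.mpr ?_
      rintro _ ⟨h, hb, rfl⟩
      exact bad_mem_SRideal K k hb
    exact hle hp

lemma good_linearIndependent :
    LinearIndependent k (fun h : {h : Fin m →₀ ℕ // h.support ∈ K.faces} =>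
      Ideal.Quotient.mk (SRideal K k) (monomial h.1 (1:k))) := by
  rw [linearIndependent_iff]
  intro l hl
  set v : {h : Fin m →₀ ℕ // h.support ∈ K.faces} → MvPolynomial (Fin m) k :=
    fun h => monomial h.1 1 with hv
  have hlin : LinearIndependent k v := by
    have := (basisMonomials (Fin m) k).linearIndependent.comp
      (Subtype.val : {h : Fin m →₀ ℕ // h.support ∈ K.faces} → _) Subtype.val_injective
    rwa [coe_basisMonomials] at this
  set P : MvPolynomial (Fin m) k := Finsupp.linearCombination k v l with hP
  have hmk : Ideal.Quotient.mk (SRideal K k) P = 0 := by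
    have h2 := Finsupp.apply_linearCombination k
      ((Ideal.Quotient.mkₐ k (SRideal K k)).toLinearMap) v l
    simp only [AlgHom.toLinearMap_apply, Ideal.Quotient.mkₐ_eq_mk, Function.comp_def] at h2
    rw [← hP] at h2
    rw [h2]; exact hl
  have hPbad : P ∈ badSpan K k := by
    rw [← SRideal_eq_badSpan]
    exact (Ideal.Quotient.eq_zero_iff_mem).mp hmk
  have hPgood : P ∈ Submodule.span k
      ((fun h : Fin m →₀ ℕ => monomial h (1:k)) '' {h | h.support ∈ K.faces}) := by
    have : P ∈ Submodule.span k (Set.range v) :=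
      Finsupp.mem_span_range_iff_exists_finsupp.mpr ⟨l, by rw [hP, Finsupp.linearCombination_apply]⟩
    refine Submodule.span_mono ?_ this
    rintro _ ⟨h, rfl⟩
    exact ⟨h.1, h.2, rfl⟩
  have hdisj : Disjoint
      (Submodule.span k ((fun h : Fin m →₀ ℕ => monomial h (1:k)) '' {h | h.support ∈ K.faces}))
      (badSpan K k) := by
    have := (basisMonomials (Fin m) k).linearIndependent.disjoint_span_image
      (s := {h : Fin m →₀ ℕ | h.support ∈ K.faces}) (t := {h | h.support ∉ K.faces})
      (by simp [Set.disjoint_left])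
    rwa [coe_basisMonomials] at this
  have hP0 : P = 0 := by
    have := hdisj.le_bot ⟨hPgood, hPbad⟩
    simpa using this
  exact linearIndependent_iff.mp hlin l hP0

lemma good_span_top :
    ⊤ ≤ Submodule.span k (Set.range fun h : {h : Fin m →₀ ℕ // h.support ∈ K.faces} =>
      Ideal.Quotient.mk (SRideal K k) (monomial h.1 (1:k))) := by
  intro x hx
  clear hx
  obtain ⟨p, rfl⟩ := Ideal.Quotient.mk_surjective x
  have hp : p ∈ Submodule.span k (Set.range fun h : Fin m →₀ ℕ => monomial h (1:k)) := by
    have h1 := (basisMonomials (Fin m) k).span_eq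
    rw [coe_basisMonomials] at h1
    rw [h1]; trivial
  induction hp using Submodule.span_induction with
  | mem q hq =>
    obtain ⟨h, rfl⟩ := hq
    by_cases hf : h.support ∈ K.faces
    · exact Submodule.subset_span ⟨⟨h, hf⟩, rfl⟩
    · rw [Ideal.Quotient.eq_zero_iff_mem.mpr (bad_mem_SRideal K k hf)]
      exact zero_mem _
  | zero => rw [map_zero]; exact zero_mem _
  | add a b _ _ ha hb => rw [map_add]; exact add_mem ha hb
  | smul a q _ hq =>
    have : Ideal.Quotient.mk (SRideal K k) (a • q)
        = a • Ideal.Quotient.mk (SRideal K k) q := by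
      rw [← Ideal.Quotient.mkₐ_eq_mk (R₁ := k), map_smul]
    rw [this]
    exact Submodule.smul_mem _ _ hq

noncomputable def srBasis : Module.Basis {h : Fin m →₀ ℕ // h.support ∈ K.faces} k (SRring K k) :=
  Module.Basis.mk (good_linearIndependent K k) (good_span_top K k)

lemma srBasis_apply (h : {h : Fin m →₀ ℕ // h.support ∈ K.faces}) :
    srBasis K k h = Ideal.Quotient.mk (SRideal K k) (monomial h.1 (1:k)) :=
  Module.Basis.mk_apply _ _ _

lemma isInternal_span_fibers {ι κ M : Type*} [DecidableEq κ] [AddCommGroup M] [Module k M]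
    (b : Module.Basis ι k M) (f : ι → κ) :
    DirectSum.IsInternal (fun L : κ => Submodule.span k (⇑b '' (f ⁻¹' {L}))) := by
  classical
  apply DirectSum.isInternal_submodule_of_iSupIndep_of_iSup_eq_top
  · rw [iSupIndep_def]
    intro L
    have hd := b.linearIndependent.disjoint_span_image
      (s := f ⁻¹' {L}) (t := (f ⁻¹' {L})ᶜ) disjoint_compl_right
    refine hd.mono_right ?_
    refine iSup_le fun j => iSup_le fun hj => Submodule.span_mono (Set.image_mono ?_)
    intro x hx
    simp only [Set.mem_preimage, Set.mem_singleton_iff] at hx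
    simp only [Set.mem_compl_iff, Set.mem_preimage, Set.mem_singleton_iff]
    rw [hx]; exact hj
  · rw [eq_top_iff, ← b.span_eq]
    refine Submodule.span_le.mpr ?_
    rintro _ ⟨i, rfl⟩
    exact Submodule.mem_iSup_of_mem (f i) (Submodule.subset_span ⟨i, rfl, rfl⟩)

lemma support_single_one_add (j : Fin m) (h : Fin m →₀ ℕ) :
    (Finsupp.single j 1 + h).support = insert j h.support := by
  ext x
  simp only [Finsupp.mem_support_iff, Finsupp.add_apply, Finsupp.single_apply,
    Finset.mem_insert]
  rcases eq_or_ne x j with rfl | hx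
  · simp
  · simp only [if_neg (Ne.symm hx), zero_add, hx, false_or]

lemma union_erase_eq {r : ℕ} {A I : Finset (Fin r)} {i : Fin r} (hi : i ∈ I) :
    insert i A ∪ I.erase i = A ∪ I := by
  ext x
  simp only [Finset.mem_union, Finset.mem_insert, Finset.mem_erase]
  constructor
  · rintro ((rfl | hx) | ⟨_, hx⟩)
    · exact Or.inr hi
    · exact Or.inl hx
    · exact Or.inr hx
  · rintro (hx | hx)
    · exact Or.inl (Or.inr hx)
    · rcases eq_or_ne x i with rfl | hne
      · exact Or.inl (Or.inl rfl)
      · exact Or.inr ⟨hne, hx⟩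

lemma vSum_mul_monomial {r : ℕ} (c : Fin m → Fin r) (i : Fin r) (h : Fin m →₀ ℕ) :
    vSum K k c i * Ideal.Quotient.mk (SRideal K k) (monomial h (1:k)) =
      ∑ j ∈ Finset.univ.filter (fun j => c j = i),
        Ideal.Quotient.mk (SRideal K k) (monomial (Finsupp.single j 1 + h) (1:k)) := by
  rw [vSum, ← map_mul, Finset.sum_mul, map_sum]
  refine Finset.sum_congr rfl fun j hj => ?_
  congr 1
  rw [monomial_single_add, pow_one]

lemma koszulDiff_single {r : ℕ} (c : Fin m → Fin r) (I : Finset (Fin r)) (q : SRring K k) :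
    koszulDiff K k c (Finsupp.single I q) =
      ∑ i ∈ I, ((-1:k) ^ (I.filter (fun y => y < i)).card) •
        Finsupp.single (I.erase i) (vSum K k c i * q) := by
  rw [koszulDiff, Finsupp.lsum_single]
  simp [LinearMap.sum_apply, LinearMap.smul_apply, LinearMap.comp_apply,
    Finsupp.lsingle_apply, LinearMap.mulLeft_apply]


end Aux

set_option synthInstance.maxHeartbeats 1000000 in
open Classical in
/-- In the Koszul complex `Λ_k[t₁,…,t_r] ⊗ k(K)` with differential
`d_α(t_i) = Σ_{j∈α_i} v_j`, `d_α(v_j) = 0`, for each `L ⊆ [r]` the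
`k`-submodule spanned by the elements `t_I ⊗ v^{(σ,h)}` with `σ ∈ K`,
`supp h = σ` and `I_α(σ) ∪ I = L` is preserved by `d_α`, and the whole
complex is the internal direct sum of these submodules over all `L ⊆ [r]`. -/
theorem koszulSub_subcomplex_and_isInternal {m r : ℕ} (K : SimplicialComplexOn m)
    (k : Type*) [Field k] (c : Fin m → Fin r) (hc : Function.Surjective c)
    (hnd : IsNondegenerate K c) :
    (∀ L : Finset (Fin r), ∀ x ∈ koszulSub K k c L,
        koszulDiff K k c x ∈ koszulSub K k c L) ∧
      DirectSum.IsInternal (fun L : Finset (Fin r) => koszulSub K k c L) := by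
  constructor
  · intro L x hx
    induction hx using Submodule.span_induction with
    | mem y hy =>
      obtain ⟨I, h, hf, hL, rfl⟩ := hy
      rw [koszulDiff_single]
      refine Submodule.sum_mem _ fun i hi => Submodule.smul_mem _ _ ?_
      rw [vSum_mul_monomial, Finsupp.single_finset_sum]
      refine Submodule.sum_mem _ fun j hj => ?_
      rw [Finset.mem_filter] at hj
      by_cases hface : (Finsupp.single j 1 + h).support ∈ K.faces
      · refine Submodule.subset_span ⟨I.erase i, Finsupp.single j 1 + h, hface, ?_, rfl⟩
        rw [support_single_one_add, Finset.image_insert, hj.2, ← hL]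
        exact union_erase_eq hi
      · rw [Ideal.Quotient.eq_zero_iff_mem.mpr (bad_mem_SRideal K k hface),
          Finsupp.single_zero]
        exact zero_mem _
    | zero => rw [map_zero]; exact zero_mem _
    | add a b _ _ ha hb => rw [map_add]; exact add_mem ha hb
    | smul a y _ hy => rw [map_smul]; exact Submodule.smul_mem _ _ hy
  · let B : Module.Basis (Σ _ : Finset (Fin r), {h : Fin m →₀ ℕ // h.support ∈ K.faces}) k
        (KoszulModule K k r) := Finsupp.basis (fun _ => srBasis K k)
    let f : (Σ _ : Finset (Fin r), {h : Fin m →₀ ℕ // h.support ∈ K.faces}) → Finset (Fin r) :=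
      fun ix => ix.2.1.support.image c ∪ ix.1
    have hint := isInternal_span_fibers k B f
    have heq : (fun L => koszulSub K k c L)
        = fun L => Submodule.span k (⇑B '' (f ⁻¹' {L})) := by
      funext L
      rw [koszulSub]
      congr 1
      ext x
      constructor
      · rintro ⟨I, h, hf, hL, rfl⟩
        refine ⟨⟨I, ⟨h, hf⟩⟩, hL, ?_⟩
        simp [B, Finsupp.coe_basis, srBasis_apply]
      · rintro ⟨⟨I, h⟩, hL, rfl⟩
        refine ⟨I, h.1, h.2, hL, ?_⟩
        simp [B, Finsupp.coe_basis, srBasis_apply]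
    rw [heq]
    exact hint
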